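/- arXiv:2406.05553 — 5 statements merged into one kernel-verified Lean document; each statement's English description precedes it below -/
import Mathlib

section
/- Let G be a graph, e ∉ G, K = K(G), K' = K(G ∪ {e}), and suppose the link lk_{K'}(e) is nonempty. Then K ∩ st_{K'}(e) is path-connected. -/
open scoped Classical

/-- An abstract simplicial complex on vertex set `V`: a collection of nonempty
finite subsets of `V` closed under taking nonempty subsets. -/
structure AbsCplx (V : Type*) where
  faces : Set (Finset V)
  nonempty_of_mem : ∀ s ∈ faces, s.Nonempty
  down_closed : ∀ s ∈ faces, ∀ t ⊆ s, t.Nonempty → t ∈ faces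
/-- The clique (flag) complex of a simple graph: the maximal simplicial complex
whose 1-skeleton is `G`. -/
def cliqueCplx {V : Type*} (G : SimpleGraph V) : AbsCplx V where
  faces := {s | s.Nonempty ∧ ∀ x ∈ s, ∀ y ∈ s, x ≠ y → G.Adj x y}
  nonempty_of_mem s hs := hs.1
  down_closed s hs t hts ht := ⟨ht, fun x hx y hy hxy => hs.2 x (hts hx) y (hts hy) hxy⟩

/-- The closed star of a simplex `σ` in `K`: the smallest subcomplex of `K`
containing all faces of `K` that contain `σ`. -/
def starC {V : Type*} (K : AbsCplx V) (σ : Finset V) : AbsCplx V where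
  faces := {t | t.Nonempty ∧ ∃ τ ∈ K.faces, σ ⊆ τ ∧ t ⊆ τ}
  nonempty_of_mem s hs := hs.1
  down_closed s hs t hts ht := ⟨ht, hs.2.imp fun τ hτ => ⟨hτ.1, hτ.2.1, hts.trans hτ.2.2⟩⟩

/-- The link of a simplex `σ` in `K`: the faces of the closed star that are disjoint from `σ`. -/
def linkC {V : Type*} (K : AbsCplx V) (σ : Finset V) : AbsCplx V where
  faces := {t | t ∈ (starC K σ).faces ∧ Disjoint t σ}
  nonempty_of_mem s hs := hs.1.1
  down_closed s hs t hts ht :=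
    ⟨(starC K σ).down_closed s hs.1 t hts ht,
      Finset.disjoint_left.mpr fun _ ha => Finset.disjoint_left.mp hs.2 (hts ha)⟩

/-- The intersection of two simplicial complexes. -/
def interC {V : Type*} (K L : AbsCplx V) : AbsCplx V where
  faces := K.faces ∩ L.faces
  nonempty_of_mem s hs := K.nonempty_of_mem s hs.1
  down_closed s hs t hts ht := ⟨K.down_closed s hs.1 t hts ht, L.down_closed s hs.2 t hts ht⟩

/-- The graph `G` with the edge `{u, v}` added. -/
def addEdge {V : Type*} (G : SimpleGraph V) (u v : V) : SimpleGraph V :=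
  G ⊔ SimpleGraph.fromEdgeSet {s(u, v)}

/-- The 1-skeleton graph of a simplicial complex: two vertices are adjacent
iff they span an edge of the complex. -/
def skel {V : Type*} (K : AbsCplx V) : SimpleGraph V where
  Adj x y := x ≠ y ∧ ({x, y} : Finset V) ∈ K.faces
  symm := by
    constructor
    intro x y h
    exact ⟨h.1.symm, by rw [Finset.pair_comm]; exact h.2⟩
  loopless := ⟨fun x h => h.1 rfl⟩

/-- Let `K = K(G)`, `K' = K(G ∪ {e})` with `e = (u,v) ∉ G`, and
suppose the link `lk_{K'}(e)` is nonempty. Then `K ∩ st_{K'}(e)` is path-connected: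
any two vertices of it are joined by a path in its 1-skeleton. -/
theorem inter_star_connected {V : Type*} (G : SimpleGraph V) (u v : V)
    (huv : u ≠ v) (he : ¬ G.Adj u v)
    (hlk : (linkC (cliqueCplx (addEdge G u v)) {u, v}).faces.Nonempty) :
    let X := interC (cliqueCplx G) (starC (cliqueCplx (addEdge G u v)) {u, v})
    ∀ a b : V, ({a} : Finset V) ∈ X.faces → ({b} : Finset V) ∈ X.faces →
      (skel X).Reachable a b := by

  -- auxiliary facts
  have adj_of : ∀ x y : V, (addEdge G u v).Adj x y → ¬(x = u ∧ y = v) →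
      ¬(x = v ∧ y = u) → G.Adj x y := by
    intro x y h h1 h2
    simp only [addEdge, SimpleGraph.sup_adj, SimpleGraph.fromEdgeSet_adj,
      Set.mem_singleton_iff, Sym2.eq_iff] at h
    tauto
  intro X a b ha hb
  -- extract a link vertex w
  obtain ⟨t, ⟨⟨htne, τ, hτ, huvτ, htτ⟩, hdisj⟩⟩ := hlk
  obtain ⟨w, hw⟩ := htne
  have hwu : w ≠ u := by
    intro h; exact (Finset.disjoint_left.mp hdisj hw) (by simp [h])
  have hwv : w ≠ v := by
    intro h; exact (Finset.disjoint_left.mp hdisj hw) (by simp [h])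
  have huτ : u ∈ τ := huvτ (by simp)
  have hvτ : v ∈ τ := huvτ (by simp)
  have hwτ : w ∈ τ := htτ hw
  have hGwu : G.Adj w u := adj_of w u (hτ.2 w hwτ u huτ hwu) (by tauto) (by tauto)
  have hGwv : G.Adj w v := adj_of w v (hτ.2 w hwτ v hvτ hwv) (by tauto) (by tauto)
  -- triangle lemma
  have tri : ∀ x : V, G.Adj x u → G.Adj x v →
      ({u, v, x} : Finset V) ∈ (cliqueCplx (addEdge G u v)).faces := by
    intro x hxu hxv
    refine ⟨⟨u, by simp⟩, ?_⟩
    intro p hp q hq hpq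
    simp only [Finset.mem_insert, Finset.mem_singleton] at hp hq
    have heuv : (addEdge G u v).Adj u v := by
      simp [addEdge, SimpleGraph.fromEdgeSet_adj, huv]
    have hax : ∀ y : V, y = u ∨ y = v → (addEdge G u v).Adj x y := by
      rintro y (rfl | rfl)
      · exact Or.inl hxu
      · exact Or.inl hxv
    rcases hp with rfl | rfl | rfl <;> rcases hq with rfl | rfl | rfl
    · exact absurd rfl hpq
    · exact heuv
    · exact (hax _ (Or.inl rfl)).symm
    · exact heuv.symm
    · exact absurd rfl hpq
    · exact (hax _ (Or.inr rfl)).symm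
    · exact hax _ (Or.inl rfl)
    · exact hax _ (Or.inr rfl)
    · exact absurd rfl hpq
  -- edge lemma: if x is adjacent in G to both u and v, each edge {x,y} with y∈{u,v}
  have edgeX : ∀ x y : V, G.Adj x u → G.Adj x v → (y = u ∨ y = v) → G.Adj x y →
      (skel X).Adj x y := by
    intro x y hxu hxv hy hxy
    refine ⟨hxy.ne, ⟨⟨⟨x, by simp⟩, ?_⟩, ⟨⟨x, by simp⟩, {u, v, x}, tri x hxu hxv,
      ?_, ?_⟩⟩⟩
    · intro p hp q hq hpq
      simp only [Finset.mem_insert, Finset.mem_singleton] at hp hq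
      rcases hp with rfl | rfl <;> rcases hq with rfl | rfl
      · exact absurd rfl hpq
      · exact hxy
      · exact hxy.symm
      · exact absurd rfl hpq
    · intro z hz
      simp only [Finset.mem_insert, Finset.mem_singleton] at hz ⊢
      tauto
    · intro z hz
      rcases Finset.mem_insert.mp hz with rfl | hz
      · simp
      · rw [Finset.mem_singleton] at hz
        subst hz
        rcases hy with rfl | rfl <;> simp
  have key : ∀ c : V, ({c} : Finset V) ∈ X.faces → (skel X).Reachable c u := by
    intro c hc
    by_cases hcu : c = u
    · subst hcu; exact SimpleGraph.Reachable.refl _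
    by_cases hcv : c = v
    · subst hcv
      exact ((edgeX w c hGwu hGwv (Or.inr rfl) hGwv).symm.reachable).trans
        (edgeX w u hGwu hGwv (Or.inl rfl) hGwu).reachable
    · obtain ⟨-, -, σ, hσ, huvσ, hcσ⟩ := hc
      have hcσ' : c ∈ σ := hcσ (by simp)
      have h1 : G.Adj c u := adj_of c u (hσ.2 c hcσ' u (huvσ (by simp)) hcu)
        (by tauto) (by tauto)
      have h2 : G.Adj c v := adj_of c v (hσ.2 c hcσ' v (huvσ (by simp)) hcv)
        (by tauto) (by tauto)
      exact (edgeX c u h1 h2 (Or.inl rfl) h1).reachable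
  exact (key a ha).trans (key b hb).symm
end

section
/- Let 𝒳 ⊂ ℝ^d be a locally finite set with all pairwise distances distinct, x ∈ 𝒳, and let Cone₁(x),…,Cone_N(x) be a fixed cover of ℝ^d by cones of angle π/3 with apex x. Define R(x;𝒳) = 2·inf{ r > 0 : |𝒳 ∩ B_r(x) ∩ Cone_i(x)| ≥ k+1 for all 1 ≤ i ≤ N }. Then the degree of x in the k-NN graph is determined locally: deg(x; 𝒳) = deg(x; 𝒳 ∩ B_{R(x;𝒳)}(x)). -/
open Metric

noncomputable section

/-- The number of points of `X` (other than `x`) at least as close to `x` as `y` is. -/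
def nearCount {E : Type*} [MetricSpace E] (X : Set E) (x y : E) : ℕ :=
  (X ∩ {z | z ≠ x ∧ dist x z ≤ dist x y}).ncard

/-- Adjacency in the `k`-nearest-neighbor graph `G_k(X)`: `x` and `y` are adjacent iff
`y` is among the `k` nearest points of `X \ {x}` to `x`, or vice versa. -/
def knnAdj {E : Type*} [MetricSpace E] (k : ℕ) (X : Set E) (x y : E) : Prop :=
  x ∈ X ∧ y ∈ X ∧ x ≠ y ∧ (nearCount X x y ≤ k ∨ nearCount X y x ≤ k)

/-- The degree of `x` in the `k`-nearest-neighbor graph `G_k(X)`. -/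
def knnDeg {E : Type*} [MetricSpace E] (k : ℕ) (X : Set E) (x : E) : ℕ :=
  {y | knnAdj k X x y}.ncard

end

open Metric in
/-- Let `𝒳 ⊂ ℝ^d` be locally finite with pairwise distinct interpoint
distances, `x ∈ 𝒳`, and let `Cone₁(x),…,Cone_N(x)` be a cover of `ℝ^d` by cones of angle
`π/3` with apex `x`.  With
`R(x;𝒳) = 2·inf { r > 0 : |𝒳 ∩ B_r(x) ∩ Cone_i(x)| ≥ k+1 for all i }`,
the degree of `x` in the `k`-NN graph is determined locally:
`deg(x;𝒳) = deg(x; 𝒳 ∩ B_{R(x;𝒳)}(x))`. -/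
theorem knn_degree_local {d N k : ℕ}
    (X : Set (EuclideanSpace ℝ (Fin d))) (x : EuclideanSpace ℝ (Fin d)) (hx : x ∈ X)
    (hloc : ∀ r : ℝ, (X ∩ closedBall x r).Finite)
    (hdist : ∀ p ∈ X, ∀ q ∈ X, ∀ r ∈ X, ∀ s ∈ X, p ≠ q → r ≠ s →
      dist p q = dist r s → (p = r ∧ q = s) ∨ (p = s ∧ q = r))
    (C : Fin N → Set (EuclideanSpace ℝ (Fin d)))
    (hcover : (⋃ i, C i) = Set.univ)
    (hcone : ∀ i, ∀ y₁ ∈ C i, ∀ y₂ ∈ C i, dist y₁ y₂ ≤ max (dist y₁ x) (dist y₂ x))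
    (hne : {r : ℝ | 0 < r ∧ ∀ i, k + 1 ≤ (X ∩ closedBall x r ∩ C i).ncard}.Nonempty) :
    let R := 2 * sInf {r : ℝ | 0 < r ∧ ∀ i, k + 1 ≤ (X ∩ closedBall x r ∩ C i).ncard}
    knnDeg k X x = knnDeg k (X ∩ closedBall x R) x := by
  intro R
  have hRdef : R = 2 * sInf {r : ℝ | 0 < r ∧ ∀ i, k + 1 ≤ (X ∩ closedBall x r ∩ C i).ncard} := rfl
  set S : Set ℝ := {r : ℝ | 0 < r ∧ ∀ i, k + 1 ≤ (X ∩ closedBall x r ∩ C i).ncard} with hSdef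
  have hr0 : 0 ≤ sInf S := Real.sInf_nonneg fun r hr => hr.1.le
  have hrR : sInf S ≤ R := by rw [hRdef]; linarith
  have hR0 : 0 ≤ R := le_trans hr0 hrR
  have hfin1 : ∀ y : EuclideanSpace ℝ (Fin d),
      (X ∩ {z | z ≠ x ∧ dist x z ≤ dist x y}).Finite := fun y =>
    (hloc (dist x y)).subset fun z hz =>
      ⟨hz.1, mem_closedBall.mpr (by rw [dist_comm]; exact hz.2.2)⟩
  have hfin2 : ∀ y : EuclideanSpace ℝ (Fin d),
      (X ∩ {z | z ≠ y ∧ dist y z ≤ dist y x}).Finite := fun y =>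
    (hloc (2 * dist y x)).subset fun z hz => ⟨hz.1, mem_closedBall.mpr (by
      have h1 := dist_triangle z y x
      have h2 := hz.2.2
      rw [dist_comm y z] at h2
      linarith)⟩
  have keyA : ∀ y : EuclideanSpace ℝ (Fin d), y ∈ X → sInf S < dist x y →
      k + 1 ≤ nearCount X x y := by
    intro y hy hlt
    obtain ⟨r, hrS, hrlt⟩ := exists_lt_of_csInf_lt hne hlt
    obtain ⟨i, hyi⟩ : ∃ i, y ∈ C i := Set.mem_iUnion.mp (hcover.symm ▸ Set.mem_univ y)
    set A := X ∩ closedBall x r ∩ C i with hA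
    have hAfin : A.Finite := (hloc r).subset fun z hz => hz.1
    have hAcard : k + 1 ≤ A.ncard := hrS.2 i
    have hyx : y ≠ x := by
      intro h; rw [h, dist_self] at hlt; linarith
    have hsub : insert y (A \ {x}) ⊆ X ∩ {z | z ≠ x ∧ dist x z ≤ dist x y} := by
      intro z hz
      simp only [Set.mem_insert_iff, Set.mem_diff, Set.mem_singleton_iff] at hz
      rcases hz with rfl | ⟨hzA, hzx⟩
      · exact ⟨hy, hyx, le_refl _⟩
      · refine ⟨hzA.1.1, hzx, ?_⟩
        have hzr : dist z x ≤ r := hzA.1.2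
        rw [dist_comm]
        linarith
    have hyA : y ∉ A \ {x} := by
      intro h
      have : dist y x ≤ r := h.1.1.2
      rw [dist_comm] at this
      linarith
    have hcard1 : A.ncard ≤ (A \ {x}).ncard + 1 := by
      calc A.ncard ≤ (insert x (A \ {x})).ncard := by
            refine Set.ncard_le_ncard (fun z hz => ?_) (((hAfin.diff).insert x))
            by_cases h : z = x
            · exact Set.mem_insert_iff.mpr (Or.inl h)
            · exact Set.mem_insert_iff.mpr (Or.inr ⟨hz, h⟩)
        _ ≤ (A \ {x}).ncard + 1 := Set.ncard_insert_le _ _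
    have hcard2 : (insert y (A \ {x})).ncard = (A \ {x}).ncard + 1 :=
      Set.ncard_insert_of_notMem hyA (hAfin.diff)
    have hbig : k + 1 ≤ (insert y (A \ {x})).ncard := by omega
    exact le_trans hbig (Set.ncard_le_ncard hsub (hfin1 y))
  have keyB : ∀ (y : EuclideanSpace ℝ (Fin d)) (Y : Set (EuclideanSpace ℝ (Fin d))),
      Y ⊆ X → (∀ z ∈ X, dist z x < dist x y → z ∈ Y) → sInf S < dist x y →
      k + 1 ≤ nearCount Y y x := by
    intro y Y hYX hYz hlt
    obtain ⟨r, hrS, hrlt⟩ := exists_lt_of_csInf_lt hne hlt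
    obtain ⟨i, hyi⟩ : ∃ i, y ∈ C i := Set.mem_iUnion.mp (hcover.symm ▸ Set.mem_univ y)
    have hAcard : k + 1 ≤ (X ∩ closedBall x r ∩ C i).ncard := hrS.2 i
    have hsub : X ∩ closedBall x r ∩ C i ⊆ Y ∩ {z | z ≠ y ∧ dist y z ≤ dist y x} := by
      intro z hz
      have hzr : dist z x ≤ r := hz.1.2
      have hzy : z ≠ y := by
        intro h; rw [h, dist_comm y x] at hzr; linarith
      refine ⟨hYz z hz.1.1 (by linarith), hzy, ?_⟩
      have hc := hcone i y hyi z hz.2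
      have hle : dist z x ≤ dist y x := by rw [dist_comm x y] at hrlt; linarith
      calc dist y z ≤ max (dist y x) (dist z x) := hc
        _ = dist y x := max_eq_left hle
    have hfinY : (Y ∩ {z | z ≠ y ∧ dist y z ≤ dist y x}).Finite :=
      (hfin2 y).subset fun z hz => ⟨hYX hz.1, hz.2⟩
    exact le_trans hAcard (Set.ncard_le_ncard hsub hfinY)
  have lemC : ∀ y : EuclideanSpace ℝ (Fin d), dist x y ≤ R →
      nearCount (X ∩ closedBall x R) x y = nearCount X x y := by
    intro y hyR
    unfold nearCount
    congr 1
    ext z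
    constructor
    · rintro ⟨⟨hzX, _⟩, hz2⟩; exact ⟨hzX, hz2⟩
    · rintro ⟨hzX, hz2⟩
      refine ⟨⟨hzX, mem_closedBall.mpr ?_⟩, hz2⟩
      have : dist x z ≤ dist x y := hz2.2
      rw [dist_comm]
      linarith
  have lemD : ∀ y : EuclideanSpace ℝ (Fin d), 2 * dist x y ≤ R →
      nearCount (X ∩ closedBall x R) y x = nearCount X y x := by
    intro y hyR
    unfold nearCount
    congr 1
    ext z
    constructor
    · rintro ⟨⟨hzX, _⟩, hz2⟩; exact ⟨hzX, hz2⟩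
    · rintro ⟨hzX, hz2⟩
      refine ⟨⟨hzX, mem_closedBall.mpr ?_⟩, hz2⟩
      have h1 := dist_triangle z y x
      have h2 : dist y z ≤ dist y x := hz2.2
      rw [dist_comm y z] at h2
      rw [dist_comm x y] at hyR
      linarith
  have hadj : ∀ y, knnAdj k X x y ↔ knnAdj k (X ∩ closedBall x R) x y := by
    intro y
    constructor
    · rintro ⟨hxX, hyX, hxy, hor⟩
      have hd : dist x y ≤ sInf S := by
        by_contra h
        push_neg at h
        rcases hor with h1 | h2
        · have := keyA y hyX h; omega
        · have := keyB y X Set.Subset.rfl (fun z hz _ => hz) h; omega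
      have hdR : dist x y ≤ R := le_trans hd hrR
      have h2dR : 2 * dist x y ≤ R := by rw [hRdef]; linarith
      refine ⟨⟨hxX, mem_closedBall_self hR0⟩,
        ⟨hyX, mem_closedBall.mpr (by rw [dist_comm]; exact hdR)⟩, hxy, ?_⟩
      rcases hor with h1 | h2
      · left; rw [lemC y hdR]; exact h1
      · right; rw [lemD y h2dR]; exact h2
    · rintro ⟨⟨hxX, _⟩, ⟨hyX, hyball⟩, hxy, hor⟩
      have hdR : dist x y ≤ R := by rw [dist_comm]; exact mem_closedBall.mp hyball
      rcases hor with h1 | h2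
      · rw [lemC y hdR] at h1
        exact ⟨hxX, hyX, hxy, Or.inl h1⟩
      · have hd : dist x y ≤ sInf S := by
          by_contra h
          push_neg at h
          have := keyB y (X ∩ closedBall x R) Set.inter_subset_left
            (fun z hz hlt => ⟨hz, mem_closedBall.mpr (by linarith)⟩) h
          omega
        have h2dR : 2 * dist x y ≤ R := by rw [hRdef]; linarith
        rw [lemD y h2dR] at h2
        exact ⟨hxX, hyX, hxy, Or.inr h2⟩
  unfold knnDeg
  congr 1
  ext y
  exact hadj y
end

section
/- Let (b₁,d₁),…,(b_m,d_m) be real intervals with 1 ≤ b_m ≤ … ≤ b₁ and d₁ ≤ d₂ ≤ … ≤ d_m (nested), and let d'₁ ≤ d₁ with d'_j = d_{j−1} for j > 1 define modified intervals (b_j, d'_j). Fix α > 1 and let j₀ be the smallest index with d_{j₀}/b_{j₀} ≥ α. Then for every j ≠ j₀: d_j/b_j ≥ α if and only if d'_j/b_j ≥ α. Consequently, the number of indices j with d_j/b_j ≥ α and the number with d'_j/b_j ≥ α differ by at most 1. -/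
open scoped Classical

/-- Let `(b₁,d₁),…,(b_m,d_m)` be intervals with
`1 ≤ b_m ≤ … ≤ b₁` and `d₁ ≤ d₂ ≤ … ≤ d_m`, and let `d'₁ ≤ d₁`, `d'_j = d_{j−1}` for
`j > 1` define modified intervals `(b_j, d'_j)`.  Fix `α > 1` and let `j₀` be the
smallest index with `d_{j₀}/b_{j₀} ≥ α`.  Then for every `j ≠ j₀`,
`d_j/b_j ≥ α ↔ d'_j/b_j ≥ α`; consequently the numbers of indices `j` with
`d_j/b_j ≥ α` and with `d'_j/b_j ≥ α` differ by at most `1`. -/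
theorem cascade_alpha_count_stable {m : ℕ} (b d d' : Fin m → ℝ)
    (hb1 : ∀ j, 1 ≤ b j)
    (hbanti : ∀ i j : Fin m, i ≤ j → b j ≤ b i)
    (hdmono : ∀ i j : Fin m, i ≤ j → d i ≤ d j)
    (hd'0 : ∀ h0 : 0 < m, d' ⟨0, h0⟩ ≤ d ⟨0, h0⟩)
    (hd' : ∀ j : Fin m, 0 < (j : ℕ) →
      d' j = d ⟨(j : ℕ) - 1, lt_of_le_of_lt (Nat.sub_le _ _) j.2⟩)
    (α : ℝ) (hα : 1 < α)
    (j₀ : Fin m) (hj₀ : α ≤ d j₀ / b j₀) (hmin : ∀ j, j < j₀ → d j / b j < α) :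
    (∀ j, j ≠ j₀ → (α ≤ d j / b j ↔ α ≤ d' j / b j)) ∧
      |((Finset.univ.filter fun j : Fin m => α ≤ d j / b j).card : ℤ) -
          ((Finset.univ.filter fun j : Fin m => α ≤ d' j / b j).card : ℤ)| ≤ 1 := by
  have hbpos : ∀ j, (0:ℝ) < b j := fun j => lt_of_lt_of_le one_pos (hb1 j)
  have hd0pos : 0 < d j₀ := by
    have : (0:ℝ) < d j₀ / b j₀ := lt_of_lt_of_le (lt_trans one_pos hα) hj₀
    exact (div_pos_iff.mp this).resolve_right (fun h => absurd h.2 (not_lt.mpr (hbpos j₀).le)) |>.1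
  have key : ∀ j, j ≠ j₀ → (α ≤ d j / b j ↔ α ≤ d' j / b j) := by
    intro j hj
    rcases lt_or_gt_of_ne hj with h | h
    · -- j < j₀ : both sides false
      have h1 : d j / b j < α := hmin j h
      have h2 : d' j ≤ d j := by
        rcases Nat.eq_zero_or_pos (j : ℕ) with h0 | h0
        · have hm : 0 < m := lt_of_le_of_lt (Nat.zero_le _) j.2
          have hj0 : j = ⟨0, hm⟩ := Fin.ext h0
          rw [hj0]; exact hd'0 hm
        · rw [hd' j h0]
          exact hdmono _ _ (by simp [Fin.le_def])
      constructor
      · intro hc; exact absurd hc (not_le.mpr h1)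
      · intro hc
        exact absurd (le_trans hc (by gcongr; exact (hbpos j).le))
          (not_le.mpr h1)
      -- unreachable
    · -- j₀ < j : both sides true
      have h0 : 0 < (j : ℕ) := lt_of_le_of_lt (Nat.zero_le _) h
      have hble : b j ≤ b j₀ := hbanti _ _ h.le
      have hdle : d j₀ ≤ d j := hdmono _ _ h.le
      have hdle' : d j₀ ≤ d ⟨(j : ℕ) - 1, lt_of_le_of_lt (Nat.sub_le _ _) j.2⟩ := by
        refine hdmono _ _ ?_
        simp only [Fin.le_def]
        exact Nat.le_sub_one_of_lt h
      constructor
      · intro _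
        rw [hd' j h0]
        exact le_trans hj₀ (div_le_div₀ (hd0pos.le.trans hdle') hdle' (hbpos j) hble)
      · intro _
        exact le_trans hj₀ (div_le_div₀ (hd0pos.le.trans hdle) hdle (hbpos j) hble)
  refine ⟨key, ?_⟩
  set S := Finset.univ.filter fun j : Fin m => α ≤ d j / b j with hS
  set T := Finset.univ.filter fun j : Fin m => α ≤ d' j / b j with hT
  have he : S.erase j₀ = T.erase j₀ := by
    ext x
    simp only [Finset.mem_erase, hS, hT, Finset.mem_filter, Finset.mem_univ, true_and]
    exact and_congr_right fun hx => key x hx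
  have h1 : S.card ≤ T.card + 1 := by
    calc S.card ≤ (insert j₀ (S.erase j₀)).card :=
          Finset.card_le_card (Finset.subset_insert_iff.mpr Finset.Subset.rfl)
      _ ≤ (S.erase j₀).card + 1 := Finset.card_insert_le _ _
      _ = (T.erase j₀).card + 1 := by rw [he]
      _ ≤ T.card + 1 := by gcongr; exact Finset.erase_subset _ _
  have h2 : T.card ≤ S.card + 1 := by
    calc T.card ≤ (insert j₀ (T.erase j₀)).card :=
          Finset.card_le_card (Finset.subset_insert_iff.mpr Finset.Subset.rfl)
      _ ≤ (T.erase j₀).card + 1 := Finset.card_insert_le _ _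
      _ = (S.erase j₀).card + 1 := by rw [he]
      _ ≤ S.card + 1 := by gcongr; exact Finset.erase_subset _ _
  rw [abs_le]
  constructor <;> [push_cast; push_cast] <;> omega
end

section
/- Let 𝓗 be a functional on finite point sets of ℝ^d and 𝒳_n i.i.d. from density f, and suppose: (i) |𝓗_n(𝒳_n)| ≤ C₃n^q a.s.; (ii) there are events A_n with P(A_n^c) ≤ e^{−n^a} and |𝓗_n(𝒳_n) − 𝓗_n(𝒳_{n±Δ})|1_{A_n} ≤ C₄Δn^b with b < 1/4 for Δ < n; (iii) for the Poisson process 𝒫_n with intensity n·f, (1/n)E[𝓗_n(𝒫_n)] → 𝓗*. Then (1/n)E[𝓗_n(𝒳_n)] → 𝓗*. -/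
open MeasureTheory ProbabilityTheory Filter
open scoped NNReal

namespace DePoisAux

open Real

lemma pp_def (n m : ℕ) :
    poissonPMFReal (n : ℝ≥0) m = Real.exp (-(n:ℝ)) * (n:ℝ)^m / m.factorial := by
  simp [poissonPMFReal]

lemma pp_nonneg (n m : ℕ) : 0 ≤ poissonPMFReal (n : ℝ≥0) m := poissonPMFReal_nonneg

lemma pp_hasSum (n : ℕ) : HasSum (fun m => poissonPMFReal (n : ℝ≥0) m) 1 :=
  poissonPMFRealSum _

lemma pp_succ (n m : ℕ) :
    poissonPMFReal (n : ℝ≥0) (m+1) * ((m:ℝ)+1) = (n:ℝ) * poissonPMFReal (n : ℝ≥0) m := by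
  rw [pp_def, pp_def, Nat.factorial_succ]
  have h1 : (m.factorial : ℝ) ≠ 0 := by positivity
  have h2 : ((m:ℝ)+1) ≠ 0 := by positivity
  push_cast
  field_simp
  ring

lemma pp_hasSum_mul (n : ℕ) :
    HasSum (fun m : ℕ => poissonPMFReal (n : ℝ≥0) m * (m:ℝ)) (n:ℝ) := by
  have h0 := (pp_hasSum n).mul_left (n:ℝ)
  rw [mul_one] at h0
  have h : HasSum (fun m : ℕ => poissonPMFReal (n : ℝ≥0) (m+1) * ((m+1:ℕ):ℝ)) (n:ℝ) := by
    have e : (fun m : ℕ => poissonPMFReal (n : ℝ≥0) (m+1) * ((m+1:ℕ):ℝ)) =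
        fun m : ℕ => (n:ℝ) * poissonPMFReal (n : ℝ≥0) m := by
      funext m
      have h1 := pp_succ n m
      push_cast
      push_cast at h1
      linarith [h1]
    rw [e]
    exact h0
  have h2 := (hasSum_nat_add_iff (f := fun m : ℕ => poissonPMFReal (n : ℝ≥0) m * (m:ℝ)) 1).mp h
  simpa using h2

lemma pp_succ2 (n m : ℕ) :
    poissonPMFReal (n : ℝ≥0) (m+2) * (((m:ℝ)+2) * ((m:ℝ)+1)) =
      (n:ℝ)^2 * poissonPMFReal (n : ℝ≥0) m := by
  rw [pp_def, pp_def]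
  have e : (m+2).factorial = (m+2) * ((m+1) * m.factorial) := by
    rw [Nat.factorial_succ, Nat.factorial_succ]
  rw [e]
  have h1 : (m.factorial : ℝ) ≠ 0 := by positivity
  push_cast
  field_simp
  ring

lemma pp_hasSum_mul2 (n : ℕ) :
    HasSum (fun m : ℕ => poissonPMFReal (n : ℝ≥0) m * ((m:ℝ) * ((m:ℝ)-1))) ((n:ℝ)^2) := by
  have h0 := (pp_hasSum n).mul_left ((n:ℝ)^2)
  rw [mul_one] at h0
  have h : HasSum (fun m : ℕ =>
      poissonPMFReal (n : ℝ≥0) (m+2) * (((m+2:ℕ):ℝ) * (((m+2:ℕ):ℝ)-1))) ((n:ℝ)^2) := by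
    have e : (fun m : ℕ =>
        poissonPMFReal (n : ℝ≥0) (m+2) * (((m+2:ℕ):ℝ) * (((m+2:ℕ):ℝ)-1))) =
        fun m : ℕ => (n:ℝ)^2 * poissonPMFReal (n : ℝ≥0) m := by
      funext m
      have h1 := pp_succ2 n m
      push_cast
      push_cast at h1
      nlinarith [h1]
    rw [e]
    exact h0
  have h2 := (hasSum_nat_add_iff
    (f := fun m : ℕ => poissonPMFReal (n : ℝ≥0) m * ((m:ℝ) * ((m:ℝ)-1))) 2).mp h
  simpa [Finset.sum_range_succ] using h2

lemma pp_hasSum_sq (n : ℕ) :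
    HasSum (fun m : ℕ => poissonPMFReal (n : ℝ≥0) m * ((m:ℝ) - n)^2) (n:ℝ) := by
  have h := ((pp_hasSum_mul2 n).add ((pp_hasSum_mul n).mul_left (1 - 2*(n:ℝ)))).add
    ((pp_hasSum n).mul_left ((n:ℝ)^2))
  have e : (fun m : ℕ => poissonPMFReal (n : ℝ≥0) m * ((m:ℝ) - n)^2) =
      fun m : ℕ => (poissonPMFReal (n : ℝ≥0) m * ((m:ℝ) * ((m:ℝ)-1)) +
        (1 - 2*(n:ℝ)) * (poissonPMFReal (n : ℝ≥0) m * (m:ℝ))) +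
        (n:ℝ)^2 * poissonPMFReal (n : ℝ≥0) m := by
    funext m; ring
  rw [e]
  convert h using 1
  ring

lemma pp_abs_summable_le (n : ℕ) (hn : 1 ≤ n) :
    Summable (fun m : ℕ => poissonPMFReal (n : ℝ≥0) m * |(m:ℝ) - n|) ∧
    ∑' m : ℕ, poissonPMFReal (n : ℝ≥0) m * |(m:ℝ) - n| ≤ (n:ℝ) ^ ((1:ℝ)/2) := by
  have hn0 : (0:ℝ) < n := by exact_mod_cast hn
  set s : ℝ := (n:ℝ) ^ ((1:ℝ)/2) with hs_def
  have hs : 0 < s := Real.rpow_pos_of_pos hn0 _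
  have hss : s * s = (n:ℝ) := by
    rw [hs_def, ← Real.rpow_add hn0]
    norm_num
  have hpt : ∀ m : ℕ, poissonPMFReal (n : ℝ≥0) m * |(m:ℝ) - n| ≤
      (poissonPMFReal (n : ℝ≥0) m * ((m:ℝ) - n)^2 + (n:ℝ) * poissonPMFReal (n : ℝ≥0) m)
        / (2*s) := by
    intro m
    rw [le_div_iff₀ (by positivity)]
    have key : 2*s*|(m:ℝ) - n| ≤ ((m:ℝ) - n)^2 + (n:ℝ) := by
      nlinarith [sq_nonneg (|(m:ℝ) - n| - s), sq_abs ((m:ℝ) - n), abs_nonneg ((m:ℝ) - n)]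
    nlinarith [mul_le_mul_of_nonneg_left key (pp_nonneg n m), pp_nonneg n m]
  have hR : HasSum (fun m : ℕ =>
      (poissonPMFReal (n : ℝ≥0) m * ((m:ℝ) - n)^2 + (n:ℝ) * poissonPMFReal (n : ℝ≥0) m)
        / (2*s)) (((n:ℝ) + (n:ℝ)*1)/(2*s)) :=
    ((pp_hasSum_sq n).add ((pp_hasSum n).mul_left (n:ℝ))).div_const _
  have hsum : Summable (fun m : ℕ => poissonPMFReal (n : ℝ≥0) m * |(m:ℝ) - n|) :=
    Summable.of_nonneg_of_le (fun m => mul_nonneg (pp_nonneg n m) (abs_nonneg _)) hpt hR.summable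
  refine ⟨hsum, ?_⟩
  have h1 : ∑' m : ℕ, poissonPMFReal (n : ℝ≥0) m * |(m:ℝ) - n| ≤ ((n:ℝ) + (n:ℝ)*1)/(2*s) := by
    rw [← hR.tsum_eq]
    exact Summable.tsum_le_tsum hpt hsum hR.summable
  refine h1.trans ?_
  rw [div_le_iff₀ (by positivity)]
  nlinarith [hss]


/-- tail coefficient -/
noncomputable def cb (n : ℕ) : ℝ :=
  Real.exp (-(n:ℝ)) * (n:ℝ)^(2*n) / ((2*n).factorial : ℝ)

lemma cb_nonneg (n : ℕ) : 0 ≤ cb n := by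
  unfold cb; positivity

lemma pp_tail_le (n : ℕ) (hn : 1 ≤ n) (j : ℕ) :
    poissonPMFReal (n : ℝ≥0) (2*n + j) ≤ cb n * (1/2)^j := by
  induction j with
  | zero =>
    rw [pp_def, cb]
    simp
  | succ j ih =>
    have hfac : poissonPMFReal (n : ℝ≥0) (2*n + (j+1)) =
        poissonPMFReal (n : ℝ≥0) (2*n + j) * ((n:ℝ)/((2*n+j+1 : ℕ):ℝ)) := by
      have e : (2*n + (j+1)) = (2*n + j) + 1 := rfl
      rw [e, pp_def, pp_def, Nat.factorial_succ]
      have h1 : (((2*n+j).factorial) : ℝ) ≠ 0 := by positivity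
      have h2 : ((2*n+j+1 : ℕ):ℝ) ≠ 0 := by positivity
      push_cast
      push_cast at h1 h2
      field_simp
      ring
    have hrat : (n:ℝ)/((2*n+j+1 : ℕ):ℝ) ≤ 1/2 := by
      rw [div_le_div_iff₀ (by positivity) (by norm_num)]
      push_cast
      have : (1:ℝ) ≤ (n:ℝ) := by exact_mod_cast hn
      linarith
    calc poissonPMFReal (n : ℝ≥0) (2*n + (j+1))
        = poissonPMFReal (n : ℝ≥0) (2*n + j) * ((n:ℝ)/((2*n+j+1 : ℕ):ℝ)) := hfac
      _ ≤ (cb n * (1/2)^j) * (1/2) := by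
          apply mul_le_mul ih hrat (by positivity) (mul_nonneg (cb_nonneg n) (by positivity))
      _ = cb n * (1/2)^(j+1) := by ring

lemma pow_div_fact_le_exp (x : ℝ) (hx : 0 ≤ x) (k : ℕ) :
    x^k / (k.factorial : ℝ) ≤ Real.exp x := by
  calc x^k / (k.factorial : ℝ)
      ≤ ∑ i ∈ Finset.range (k+1), x^i / (i.factorial : ℝ) := by
        exact Finset.single_le_sum (f := fun i => x^i / (i.factorial : ℝ))
          (fun i _ => by positivity) (Finset.self_mem_range_succ k)
    _ ≤ Real.exp x := Real.sum_le_exp_of_nonneg hx _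

lemma log_four_gt_one : 1 < Real.log 4 := by
  rw [Real.lt_log_iff_exp_lt (by norm_num)]
  have := Real.exp_one_lt_d9
  linarith

lemma cb_le (n : ℕ) : cb n ≤ Real.exp (-((Real.log 4 - 1) * n)) := by
  have h4 : ((2*n : ℕ):ℝ)^(2*n) / (((2*n).factorial : ℕ) : ℝ) ≤ Real.exp ((2*n : ℕ):ℝ) :=
    pow_div_fact_le_exp _ (by positivity) _
  have hpow : ((2*n : ℕ):ℝ)^(2*n) = 4^n * (n:ℝ)^(2*n) := by
    push_cast
    rw [mul_pow, pow_mul]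
    norm_num
  have key : (n:ℝ)^(2*n) / ((2*n).factorial : ℝ) ≤ Real.exp ((2*n : ℕ):ℝ) / 4^n := by
    rw [div_le_div_iff₀ (by positivity) (by positivity)]
    have h5 : ((2*n : ℕ):ℝ)^(2*n) ≤ Real.exp ((2*n : ℕ):ℝ) * ((2*n).factorial : ℝ) := by
      rw [div_le_iff₀ (by positivity)] at h4
      exact_mod_cast h4
    rw [hpow] at h5
    have h6 : (0:ℝ) < ((2*n).factorial : ℝ) := by positivity
    nlinarith
  have e4 : (4:ℝ)^n = Real.exp (Real.log 4 * n) := by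
    rw [mul_comm, Real.exp_nat_mul, Real.exp_log (by norm_num)]
  calc cb n = Real.exp (-(n:ℝ)) * ((n:ℝ)^(2*n) / ((2*n).factorial : ℝ)) := by
        unfold cb; ring
    _ ≤ Real.exp (-(n:ℝ)) * (Real.exp ((2*n : ℕ):ℝ) / 4^n) := by
        apply mul_le_mul_of_nonneg_left key (by positivity)
    _ = Real.exp (-((Real.log 4 - 1) * n)) := by
        rw [e4, ← Real.exp_sub, ← Real.exp_add]
        congr 1
        push_cast
        ring

lemma g_summable (K : ℕ) :
    Summable (fun j : ℕ => ((j:ℝ)+1)^K * (1/2:ℝ)^j) := by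
  have S : Summable (fun m : ℕ => (m:ℝ)^K * (1/2:ℝ)^m) :=
    summable_pow_mul_geometric_of_norm_lt_one K (r := (1/2:ℝ)) (by rw [Real.norm_eq_abs]; rw [abs_of_pos]; norm_num; norm_num)
  have S1 : Summable (fun j : ℕ => ((j+1:ℕ):ℝ)^K * (1/2:ℝ)^(j+1)) :=
    (summable_nat_add_iff (f := fun m : ℕ => (m:ℝ)^K * (1/2:ℝ)^m) 1).mpr S
  refine (S1.mul_left 2).congr fun j => ?_
  push_cast
  rw [pow_succ]
  ring

lemma pp_tail_sum (n : ℕ) (hn : 1 ≤ n) :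
    Summable (fun j : ℕ => poissonPMFReal (n : ℝ≥0) (2*n + j)) ∧
    ∑' j : ℕ, poissonPMFReal (n : ℝ≥0) (2*n + j) ≤ cb n * 2 := by
  have hR : Summable (fun j : ℕ => cb n * (1/2:ℝ)^j) := summable_geometric_two.mul_left _
  have hsum : Summable (fun j : ℕ => poissonPMFReal (n : ℝ≥0) (2*n + j)) :=
    Summable.of_nonneg_of_le (fun j => pp_nonneg n _) (pp_tail_le n hn) hR
  refine ⟨hsum, ?_⟩
  calc ∑' j : ℕ, poissonPMFReal (n : ℝ≥0) (2*n + j)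
      ≤ ∑' j : ℕ, cb n * (1/2:ℝ)^j := Summable.tsum_le_tsum (pp_tail_le n hn) hsum hR
    _ = cb n * ∑' j : ℕ, (1/2:ℝ)^j := tsum_mul_left
    _ = cb n * 2 := by rw [tsum_geometric_two]

lemma pp_tail_sum_q (n K : ℕ) (hn : 1 ≤ n) {q : ℝ} (hq : 0 < q) (hqK : q ≤ (K:ℝ)) :
    Summable (fun j : ℕ => poissonPMFReal (n : ℝ≥0) (2*n + j) * ((2*n + j : ℕ):ℝ)^q) ∧
    ∑' j : ℕ, poissonPMFReal (n : ℝ≥0) (2*n + j) * ((2*n + j : ℕ):ℝ)^q ≤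
      (cb n * (2*(n:ℝ))^K) * ∑' j : ℕ, ((j:ℝ)+1)^K * (1/2:ℝ)^j := by
  have hn1 : (1:ℝ) ≤ (n:ℝ) := by exact_mod_cast hn
  have hpt : ∀ j : ℕ, poissonPMFReal (n : ℝ≥0) (2*n + j) * ((2*n + j : ℕ):ℝ)^q ≤
      (cb n * (2*(n:ℝ))^K) * (((j:ℝ)+1)^K * (1/2:ℝ)^j) := by
    intro j
    have hbase : (1:ℝ) ≤ ((2*n + j : ℕ):ℝ) := by
      push_cast; linarith
    have h1 : ((2*n + j : ℕ):ℝ)^q ≤ ((2*n + j : ℕ):ℝ)^(K:ℝ) :=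
      Real.rpow_le_rpow_of_exponent_le hbase hqK
    rw [Real.rpow_natCast] at h1
    have h2 : ((2*n + j : ℕ):ℝ)^K ≤ (2*(n:ℝ))^K * ((j:ℝ)+1)^K := by
      rw [← mul_pow]
      apply pow_le_pow_left₀ (by positivity)
      push_cast
      nlinarith
    calc poissonPMFReal (n : ℝ≥0) (2*n + j) * ((2*n + j : ℕ):ℝ)^q
        ≤ (cb n * (1/2:ℝ)^j) * ((2*(n:ℝ))^K * ((j:ℝ)+1)^K) := by
          apply mul_le_mul (pp_tail_le n hn j) (h1.trans h2)
            (Real.rpow_nonneg (by positivity) _)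
            (mul_nonneg (cb_nonneg n) (by positivity))
      _ = (cb n * (2*(n:ℝ))^K) * (((j:ℝ)+1)^K * (1/2:ℝ)^j) := by ring
  have hR : Summable (fun j : ℕ => (cb n * (2*(n:ℝ))^K) * (((j:ℝ)+1)^K * (1/2:ℝ)^j)) :=
    (g_summable K).mul_left _
  have hsum : Summable (fun j : ℕ => poissonPMFReal (n : ℝ≥0) (2*n + j) * ((2*n + j : ℕ):ℝ)^q) :=
    Summable.of_nonneg_of_le
      (fun j => mul_nonneg (pp_nonneg n _) (Real.rpow_nonneg (by positivity) _)) hpt hR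
  refine ⟨hsum, ?_⟩
  calc ∑' j : ℕ, poissonPMFReal (n : ℝ≥0) (2*n + j) * ((2*n + j : ℕ):ℝ)^q
      ≤ ∑' j : ℕ, (cb n * (2*(n:ℝ))^K) * (((j:ℝ)+1)^K * (1/2:ℝ)^j) :=
        Summable.tsum_le_tsum hpt hsum hR
    _ = (cb n * (2*(n:ℝ))^K) * ∑' j : ℕ, ((j:ℝ)+1)^K * (1/2:ℝ)^j := tsum_mul_left

lemma pp_summable_q (n K : ℕ) (hn : 1 ≤ n) {q : ℝ} (hq : 0 < q) (hqK : q ≤ (K:ℝ)) :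
    Summable (fun m : ℕ => poissonPMFReal (n : ℝ≥0) m * ((m:ℕ):ℝ)^q) := by
  have h := (pp_tail_sum_q n K hn hq hqK).1
  have h2 : Summable (fun j : ℕ => poissonPMFReal (n : ℝ≥0) (j + 2*n) * ((j + 2*n : ℕ):ℝ)^q) :=
    h.congr fun j => by rw [add_comm]
  exact (summable_nat_add_iff (f := fun m : ℕ => poissonPMFReal (n : ℝ≥0) m * ((m:ℕ):ℝ)^q)
    (2*n)).mp h2


lemma tendsto_rpow_mul_exp_neg_rpow (w s α : ℝ) (hs : 0 < s) (hα : 0 < α) :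
    Filter.Tendsto (fun x : ℝ => x ^ w * Real.exp (-(s * x ^ α))) Filter.atTop (nhds 0) := by
  have h1 := tendsto_rpow_mul_exp_neg_mul_atTop_nhds_zero (w/α) s hs
  have h2 := h1.comp (tendsto_rpow_atTop hα)
  refine h2.congr' ?_
  filter_upwards [Filter.eventually_gt_atTop (0:ℝ)] with x hx
  simp only [Function.comp]
  rw [← Real.rpow_mul hx.le]
  rw [mul_div_cancel₀ _ hα.ne', neg_mul]

end DePoisAux




section Main

open DePoisAux

/-- **de-Poissonization.** Let `𝓗` be a functional on finite point sets
of `ℝ^d` and `𝒳_n` an i.i.d. sample from a density.  Suppose (i) `|𝓗_n(𝒳_m)| ≤ C₃ m^q`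
a.s.; (ii) there are events `A_n` with `P(A_nᶜ) ≤ e^{−n^a}` and
`|𝓗_n(𝒳_n) − 𝓗_n(𝒳_{n±Δ})|·1_{A_n} ≤ C₄ Δ n^b` for `Δ < n`, with `b < 1/4`; and
(iii) for the Poisson process `𝒫_n` with intensity `n·f` (i.e. `𝒳_N` with
`N ∼ Poisson(n)`), `(1/n)·E[𝓗_n(𝒫_n)] → 𝓗*`.  Then `(1/n)·E[𝓗_n(𝒳_n)] → 𝓗*`. -/
theorem dePoissonization
    {Ω : Type*} [MeasurableSpace Ω] (P : Measure Ω) [IsProbabilityMeasure P]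
    {E : Type*} [MeasurableSpace E]
    (X : ℕ → Ω → E) (hXmeas : ∀ i, Measurable (X i))
    (hindep : iIndepFun X P)
    (μ : Measure E) (hident : ∀ i, Measure.map (X i) P = μ)
    (H : (n m : ℕ) → (Fin m → E) → ℝ) (hHmeas : ∀ n m, Measurable (H n m))
    (C₃ q : ℝ) (hC₃ : 0 < C₃) (hq : 0 < q)
    (hbound : ∀ n m : ℕ, ∀ᵐ ω ∂P, |H n m (fun j => X j ω)| ≤ C₃ * (m : ℝ) ^ q)
    (a : ℝ) (ha : 0 < a)
    (A : ℕ → Set Ω) (hAmeas : ∀ n, MeasurableSet (A n))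
    (hA : ∀ n : ℕ, P (A n)ᶜ ≤ ENNReal.ofReal (Real.exp (-(n : ℝ) ^ a)))
    (C₄ b : ℝ) (hC₄ : 0 < C₄) (hb : b < 1 / 4)
    (hdiff : ∀ n : ℕ, ∀ᵐ ω ∂P, ω ∈ A n → ∀ m : ℕ, |(m : ℤ) - (n : ℤ)| < (n : ℤ) →
      |H n n (fun j => X j ω) - H n m (fun j => X j ω)| ≤
        C₄ * |(m : ℝ) - (n : ℝ)| * (n : ℝ) ^ b)
    (Hstar : ℝ)
    (hpois : Tendsto
      (fun n : ℕ => (1 / (n : ℝ)) *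
        ∑' m : ℕ, poissonPMFReal (n : ℝ≥0) m * ∫ ω, H n m (fun j => X j ω) ∂P)
      atTop (nhds Hstar)) :
    Tendsto (fun n : ℕ => (1 / (n : ℝ)) * ∫ ω, H n n (fun j => X j ω) ∂P)
      atTop (nhds Hstar) := by
  classical
  -- basic abbreviations
  set K : ℕ := Nat.ceil q with hKdef
  have hqK : q ≤ (K:ℝ) := Nat.le_ceil q
  set CK : ℝ := ∑' j : ℕ, ((j:ℝ)+1)^K * (1/2:ℝ)^j with hCKdef
  have hCK0 : 0 ≤ CK := tsum_nonneg (fun j => by positivity)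
  set s4 : ℝ := Real.log 4 - 1 with hs4def
  have hs4 : 0 < s4 := by
    have := log_four_gt_one
    rw [hs4def]; linarith
  -- measurability / integrability
  have hYm : ∀ n m : ℕ, Measurable fun ω => H n m (fun j => X j ω) :=
    fun n m => (hHmeas n m).comp (measurable_pi_lambda _ fun j => hXmeas j)
  have hInt : ∀ n m : ℕ, Integrable (fun ω => H n m (fun j => X j ω)) P := by
    intro n m
    refine Integrable.mono' (integrable_const (C₃ * (m:ℝ)^q)) (hYm n m).aestronglyMeasurable ?_
    filter_upwards [hbound n m] with ω h using by rwa [Real.norm_eq_abs]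
  set I : ℕ → ℕ → ℝ := fun n m => ∫ ω, H n m (fun j => X j ω) ∂P with hIdef
  set S : ℕ → ℝ := fun n => ∑' m : ℕ, poissonPMFReal (n : ℝ≥0) m * I n m with hSdef
  -- crude bound on I
  have B1 : ∀ n m : ℕ, |I n m| ≤ C₃ * (m:ℝ)^q := by
    intro n m
    have h := norm_integral_le_of_norm_le_const (μ := P)
      (f := fun ω => H n m (fun j => X j ω)) (C := C₃ * (m:ℝ)^q) ?_
    · simpa [Real.norm_eq_abs, measure_univ] using h
    · filter_upwards [hbound n m] with ω h using by rwa [Real.norm_eq_abs]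
  -- near bound on differences
  have B2 : ∀ n m : ℕ, |(m : ℤ) - (n : ℤ)| < (n : ℤ) →
      |I n n - I n m| ≤ C₄ * |(m:ℝ) - (n:ℝ)| * (n:ℝ)^b +
        C₃ * ((n:ℝ)^q + (m:ℝ)^q) * Real.exp (-(n:ℝ)^a) := by
    intro n m hm
    have hint : Integrable (fun ω => H n n (fun j => X j ω) - H n m (fun j => X j ω)) P :=
      (hInt n n).sub (hInt n m)
    have hsub : I n n - I n m =
        ∫ ω, (H n n (fun j => X j ω) - H n m (fun j => X j ω)) ∂P :=
      (integral_sub (hInt n n) (hInt n m)).symm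
    have hsplit :
        ∫ ω, (H n n (fun j => X j ω) - H n m (fun j => X j ω)) ∂P =
        (∫ ω in A n, (H n n (fun j => X j ω) - H n m (fun j => X j ω)) ∂P) +
        (∫ ω in (A n)ᶜ, (H n n (fun j => X j ω) - H n m (fun j => X j ω)) ∂P) :=
      (integral_add_compl (hAmeas n) hint).symm
    have hb1 : ‖∫ ω in A n, (H n n (fun j => X j ω) - H n m (fun j => X j ω)) ∂P‖ ≤
        (C₄ * |(m:ℝ) - (n:ℝ)| * (n:ℝ)^b) * (P (A n)).toReal := by
      refine norm_setIntegral_le_of_norm_le_const_ae' (measure_lt_top _ _) ?_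
      filter_upwards [hdiff n] with ω h hω
      rw [Real.norm_eq_abs]
      exact h hω m hm
    have hb2 : ‖∫ ω in (A n)ᶜ, (H n n (fun j => X j ω) - H n m (fun j => X j ω)) ∂P‖ ≤
        (C₃ * ((n:ℝ)^q + (m:ℝ)^q)) * (P (A n)ᶜ).toReal := by
      refine norm_setIntegral_le_of_norm_le_const_ae' (measure_lt_top _ _) ?_
      filter_upwards [hbound n n, hbound n m] with ω h1 h2 hω
      rw [Real.norm_eq_abs]
      calc |H n n (fun j => X j ω) - H n m (fun j => X j ω)|
          ≤ |H n n (fun j => X j ω)| + |H n m (fun j => X j ω)| := abs_sub _ _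
        _ ≤ C₃ * (n:ℝ)^q + C₃ * (m:ℝ)^q := add_le_add h1 h2
        _ = C₃ * ((n:ℝ)^q + (m:ℝ)^q) := by ring
    have hPA : (P (A n)).toReal ≤ 1 := by
      have := prob_le_one (μ := P) (s := A n)
      simpa using ENNReal.toReal_mono (by simp) this
    have hPAc : (P (A n)ᶜ).toReal ≤ Real.exp (-(n:ℝ)^a) :=
      ENNReal.toReal_le_of_le_ofReal (Real.exp_nonneg _) (hA n)
    have hc1 : (0:ℝ) ≤ C₄ * |(m:ℝ) - (n:ℝ)| * (n:ℝ)^b := by positivity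
    have hc2 : (0:ℝ) ≤ C₃ * ((n:ℝ)^q + (m:ℝ)^q) := by positivity
    calc |I n n - I n m|
        = ‖(∫ ω in A n, (H n n (fun j => X j ω) - H n m (fun j => X j ω)) ∂P) +
            (∫ ω in (A n)ᶜ, (H n n (fun j => X j ω) - H n m (fun j => X j ω)) ∂P)‖ := by
          rw [hsub, hsplit, Real.norm_eq_abs]
      _ ≤ ‖∫ ω in A n, (H n n (fun j => X j ω) - H n m (fun j => X j ω)) ∂P‖ +
            ‖∫ ω in (A n)ᶜ, (H n n (fun j => X j ω) - H n m (fun j => X j ω)) ∂P‖ :=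
          norm_add_le _ _
      _ ≤ (C₄ * |(m:ℝ) - (n:ℝ)| * (n:ℝ)^b) * (P (A n)).toReal +
            (C₃ * ((n:ℝ)^q + (m:ℝ)^q)) * (P (A n)ᶜ).toReal := add_le_add hb1 hb2
      _ ≤ (C₄ * |(m:ℝ) - (n:ℝ)| * (n:ℝ)^b) * 1 +
            (C₃ * ((n:ℝ)^q + (m:ℝ)^q)) * Real.exp (-(n:ℝ)^a) :=
          add_le_add (mul_le_mul_of_nonneg_left hPA hc1)
            (mul_le_mul_of_nonneg_left hPAc hc2)
      _ = C₄ * |(m:ℝ) - (n:ℝ)| * (n:ℝ)^b + C₃ * ((n:ℝ)^q + (m:ℝ)^q) * Real.exp (-(n:ℝ)^a) := by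
          ring
  -- Error term
  set Err : ℕ → ℝ := fun n =>
    C₄ * (n:ℝ)^b * (n:ℝ)^((1:ℝ)/2)
    + C₃*(1+(2:ℝ)^q)*(n:ℝ)^q*Real.exp (-((n:ℝ)^a))
    + Real.exp (-(n:ℝ))*(C₃*(n:ℝ)^q)
    + (C₃*(n:ℝ)^q)*(cb n*2)
    + C₃*(cb n * ((2*(n:ℝ))^K * CK)) with hErrdef
  -- the key estimate
  have key : ∀ n : ℕ, 1 ≤ n → |I n n - S n| ≤ Err n := by
    intro n hn
    have hn1 : (1:ℝ) ≤ (n:ℝ) := by exact_mod_cast hn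
    have hn0 : (0:ℝ) < (n:ℝ) := by linarith
    set w1 : ℕ → ℝ := fun m => poissonPMFReal (n:ℝ≥0) m *
      (C₄ * |(m:ℝ)-(n:ℝ)| * (n:ℝ)^b) with hw1def
    set w2 : ℕ → ℝ := fun m => poissonPMFReal (n:ℝ≥0) m *
      (C₃*(1+(2:ℝ)^q)*(n:ℝ)^q*Real.exp (-((n:ℝ)^a))) with hw2def
    set w3 : ℕ → ℝ := fun m => if 2*n ≤ m ∨ m = 0 then
      poissonPMFReal (n:ℝ≥0) m * (C₃ * ((n:ℝ)^q + (m:ℝ)^q)) else 0 with hw3def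
    have hq2n : ∀ m : ℕ, m ≤ 2*n → (m:ℝ)^q ≤ (2:ℝ)^q * (n:ℝ)^q := by
      intro m hm
      have hm' : (m:ℝ) ≤ 2*(n:ℝ) := by exact_mod_cast hm
      calc (m:ℝ)^q ≤ (2*(n:ℝ))^q := Real.rpow_le_rpow (Nat.cast_nonneg m) hm' hq.le
        _ = (2:ℝ)^q * (n:ℝ)^q := Real.mul_rpow (by norm_num) (by positivity)
    have hSq : Summable (fun m : ℕ => poissonPMFReal (n:ℝ≥0) m * (m:ℝ)^q) :=
      pp_summable_q n K hn hq hqK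
    have hw1 : Summable w1 := by
      refine ((pp_abs_summable_le n hn).1.mul_left (C₄ * (n:ℝ)^b)).congr fun m => ?_
      simp only [hw1def]; ring
    have hw2 : Summable w2 := (pp_hasSum n).summable.mul_right _
    have hw3 : Summable w3 := by
      refine Summable.of_nonneg_of_le (fun m => ?_) (fun m => ?_)
        (((pp_hasSum n).summable.mul_right (C₃*(n:ℝ)^q)).add (hSq.mul_left C₃))
      · simp only [hw3def]
        split_ifs
        · exact mul_nonneg (pp_nonneg n m) (mul_nonneg hC₃.le
            (add_nonneg (Real.rpow_nonneg hn0.le _) (Real.rpow_nonneg (Nat.cast_nonneg m) _)))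
        · exact le_refl 0
      · simp only [hw3def]
        split_ifs
        · apply le_of_eq; ring
        · exact add_nonneg (mul_nonneg (pp_nonneg n m)
            (mul_nonneg hC₃.le (Real.rpow_nonneg hn0.le _)))
            (mul_nonneg hC₃.le (mul_nonneg (pp_nonneg n m)
              (Real.rpow_nonneg (Nat.cast_nonneg m) _)))
    have hwpt : ∀ m : ℕ, ‖poissonPMFReal (n:ℝ≥0) m * (I n n - I n m)‖ ≤
        w1 m + w2 m + w3 m := by
      intro m
      rw [Real.norm_eq_abs, abs_mul, abs_of_nonneg (pp_nonneg n m)]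
      by_cases hfar : 2*n ≤ m ∨ m = 0
      · have hd : |I n n - I n m| ≤ C₃ * ((n:ℝ)^q + (m:ℝ)^q) := by
          calc |I n n - I n m| ≤ |I n n| + |I n m| := abs_sub _ _
            _ ≤ C₃*(n:ℝ)^q + C₃*(m:ℝ)^q := add_le_add (B1 n n) (B1 n m)
            _ = C₃ * ((n:ℝ)^q + (m:ℝ)^q) := by ring
        have h3 : poissonPMFReal (n:ℝ≥0) m * |I n n - I n m| ≤ w3 m := by
          simp only [hw3def, if_pos hfar]
          exact mul_le_mul_of_nonneg_left hd (pp_nonneg n m)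
        have h1 : 0 ≤ w1 m := by
          simp only [hw1def]
          exact mul_nonneg (pp_nonneg n m) (mul_nonneg
            (mul_nonneg hC₄.le (abs_nonneg _)) (Real.rpow_nonneg hn0.le _))
        have h2 : 0 ≤ w2 m := by
          simp only [hw2def]
          refine mul_nonneg (pp_nonneg n m) ?_
          have h2q : (0:ℝ) ≤ (2:ℝ)^q := Real.rpow_nonneg (by norm_num) _
          exact mul_nonneg (mul_nonneg (mul_nonneg hC₃.le (by linarith))
            (Real.rpow_nonneg hn0.le q)) (Real.exp_nonneg _)
        linarith
      · push_neg at hfar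
        obtain ⟨hml', hm0⟩ := hfar
        have hml : ¬ (2*n ≤ m) := not_le.mpr hml'
        have hmint : |(m : ℤ) - (n : ℤ)| < (n : ℤ) := by
          rw [abs_lt]
          omega
        have hmq : (m:ℝ)^q ≤ (2:ℝ)^q*(n:ℝ)^q := hq2n m (by omega)
        have hd2 : |I n n - I n m| ≤ C₄ * |(m:ℝ)-(n:ℝ)| * (n:ℝ)^b +
            C₃*(1+(2:ℝ)^q)*(n:ℝ)^q*Real.exp (-((n:ℝ)^a)) := by
          refine (B2 n m hmint).trans (add_le_add_right ?_ _)
          have hsum : (n:ℝ)^q + (m:ℝ)^q ≤ (1+(2:ℝ)^q)*(n:ℝ)^q := by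
            nlinarith [Real.rpow_nonneg hn0.le q]
          calc C₃ * ((n:ℝ)^q + (m:ℝ)^q) * Real.exp (-(n:ℝ)^a)
              ≤ C₃ * ((1+(2:ℝ)^q)*(n:ℝ)^q) * Real.exp (-(n:ℝ)^a) :=
                mul_le_mul_of_nonneg_right
                  (mul_le_mul_of_nonneg_left hsum hC₃.le) (Real.exp_nonneg _)
            _ = C₃*(1+(2:ℝ)^q)*(n:ℝ)^q*Real.exp (-((n:ℝ)^a)) := by ring
        have h0 : poissonPMFReal (n:ℝ≥0) m * |I n n - I n m| ≤ w1 m + w2 m := by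
          simp only [hw1def, hw2def]
          calc poissonPMFReal (n:ℝ≥0) m * |I n n - I n m|
              ≤ poissonPMFReal (n:ℝ≥0) m * (C₄ * |(m:ℝ)-(n:ℝ)| * (n:ℝ)^b +
                C₃*(1+(2:ℝ)^q)*(n:ℝ)^q*Real.exp (-((n:ℝ)^a))) :=
                mul_le_mul_of_nonneg_left hd2 (pp_nonneg n m)
            _ = poissonPMFReal (n:ℝ≥0) m * (C₄ * |(m:ℝ)-(n:ℝ)| * (n:ℝ)^b) +
                poissonPMFReal (n:ℝ≥0) m *
                  (C₃*(1+(2:ℝ)^q)*(n:ℝ)^q*Real.exp (-((n:ℝ)^a))) := mul_add _ _ _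
        have h3 : 0 ≤ w3 m := by
          simp only [hw3def]
          rw [if_neg (not_or.mpr ⟨hml, hm0⟩)]
        linarith
    have hSsum : Summable (fun m : ℕ => poissonPMFReal (n:ℝ≥0) m * I n m) := by
      refine Summable.of_norm (Summable.of_nonneg_of_le (fun m => norm_nonneg _)
        (fun m => ?_) (hSq.mul_left C₃))
      rw [Real.norm_eq_abs, abs_mul, abs_of_nonneg (pp_nonneg n m)]
      calc poissonPMFReal (n:ℝ≥0) m * |I n m|
          ≤ poissonPMFReal (n:ℝ≥0) m * (C₃*(m:ℝ)^q) :=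
            mul_le_mul_of_nonneg_left (B1 n m) (pp_nonneg n m)
        _ = C₃ * (poissonPMFReal (n:ℝ≥0) m * (m:ℝ)^q) := by ring
    have hSn : S n = ∑' m : ℕ, poissonPMFReal (n:ℝ≥0) m * I n m := by rw [hSdef]
    have hIS : HasSum (fun m : ℕ => poissonPMFReal (n:ℝ≥0) m * (I n n - I n m))
        (I n n - S n) := by
      have h1 : HasSum (fun m : ℕ => poissonPMFReal (n:ℝ≥0) m * I n n) (I n n) := by
        simpa using (pp_hasSum n).mul_right (I n n)
      have e : (fun m : ℕ => poissonPMFReal (n:ℝ≥0) m * (I n n - I n m)) =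
          fun m : ℕ => poissonPMFReal (n:ℝ≥0) m * I n n -
            poissonPMFReal (n:ℝ≥0) m * I n m := funext fun m => mul_sub _ _ _
      rw [e, hSn]
      exact h1.sub hSsum.hasSum
    have habs : |I n n - S n| ≤ ∑' m : ℕ, (w1 m + w2 m + w3 m) := by
      rw [← hIS.tsum_eq, ← Real.norm_eq_abs]
      exact tsum_of_norm_bounded ((hw1.add hw2).add hw3).hasSum hwpt
    have ht12 : ∑' m : ℕ, (w1 m + w2 m + w3 m) =
        (∑' m, w1 m) + (∑' m, w2 m) + (∑' m, w3 m) := by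
      rw [Summable.tsum_add (hw1.add hw2) hw3, Summable.tsum_add hw1 hw2]
    have hT1 : ∑' m, w1 m ≤ C₄ * (n:ℝ)^b * (n:ℝ)^((1:ℝ)/2) := by
      have e : w1 = fun m => (C₄ * (n:ℝ)^b) *
          (poissonPMFReal (n:ℝ≥0) m * |(m:ℝ)-(n:ℝ)|) := by
        funext m; simp only [hw1def]; ring
      rw [e, tsum_mul_left]
      have hcc : (0:ℝ) ≤ C₄ * (n:ℝ)^b := mul_nonneg hC₄.le (Real.rpow_nonneg hn0.le _)
      calc (C₄ * (n:ℝ)^b) * ∑' m, poissonPMFReal (n:ℝ≥0) m * |(m:ℝ)-(n:ℝ)|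
          ≤ (C₄*(n:ℝ)^b) * (n:ℝ)^((1:ℝ)/2) :=
            mul_le_mul_of_nonneg_left (pp_abs_summable_le n hn).2 hcc
        _ = C₄ * (n:ℝ)^b * (n:ℝ)^((1:ℝ)/2) := by ring
    have hT2 : ∑' m, w2 m = C₃*(1+(2:ℝ)^q)*(n:ℝ)^q*Real.exp (-((n:ℝ)^a)) := by
      have h := (pp_hasSum n).mul_right (C₃*(1+(2:ℝ)^q)*(n:ℝ)^q*Real.exp (-((n:ℝ)^a)))
      rw [one_mul] at h
      rw [hw2def]
      exact h.tsum_eq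
    have hT3 : ∑' m, w3 m ≤ Real.exp (-(n:ℝ))*(C₃*(n:ℝ)^q) +
        ((C₃*(n:ℝ)^q)*(cb n*2) + C₃*(cb n*((2*(n:ℝ))^K * CK))) := by
      have hsplit : ∑' m, w3 m =
          (∑ i ∈ Finset.range (2*n), w3 i) + ∑' j : ℕ, w3 (j + 2*n) :=
        (hw3.sum_add_tsum_nat_add (2*n)).symm
      have hhead : ∑ i ∈ Finset.range (2*n), w3 i = w3 0 := by
        apply Finset.sum_eq_single 0
        · intro i him hi
          have hir := Finset.mem_range.mp him
          simp only [hw3def]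
          rw [if_neg (not_or.mpr ⟨by omega, hi⟩)]
        · intro h0
          exact absurd (Finset.mem_range.mpr (by omega)) h0
      have hw30 : w3 0 = Real.exp (-(n:ℝ))*(C₃*(n:ℝ)^q) := by
        simp only [hw3def]
        rw [if_pos (show (2*n ≤ 0 ∨ True) from Or.inr trivial), pp_def]
        simp [Real.zero_rpow hq.ne']
      have hW : ∀ j : ℕ, w3 (j + 2*n) = (C₃*(n:ℝ)^q) * poissonPMFReal (n:ℝ≥0) (2*n+j)
          + C₃ * (poissonPMFReal (n:ℝ≥0) (2*n+j) * ((2*n+j : ℕ):ℝ)^q) := by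
        intro j
        simp only [hw3def]
        rw [if_pos (Or.inl (by omega)), add_comm j (2*n)]
        ring
      have htail : ∑' j : ℕ, w3 (j + 2*n) ≤
          (C₃*(n:ℝ)^q)*(cb n*2) + C₃*(cb n*((2*(n:ℝ))^K * CK)) := by
        rw [tsum_congr hW]
        rw [Summable.tsum_add ((pp_tail_sum n hn).1.mul_left _)
          ((pp_tail_sum_q n K hn hq hqK).1.mul_left _), tsum_mul_left, tsum_mul_left]
        refine add_le_add ?_ ?_
        · exact mul_le_mul_of_nonneg_left (pp_tail_sum n hn).2
            (mul_nonneg hC₃.le (Real.rpow_nonneg hn0.le _))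
        · refine mul_le_mul_of_nonneg_left ?_ hC₃.le
          refine ((pp_tail_sum_q n K hn hq hqK).2).trans (le_of_eq ?_)
          rw [mul_assoc]
      calc ∑' m, w3 m = w3 0 + ∑' j : ℕ, w3 (j + 2*n) := by rw [hsplit, hhead]
        _ ≤ Real.exp (-(n:ℝ))*(C₃*(n:ℝ)^q) +
            ((C₃*(n:ℝ)^q)*(cb n*2) + C₃*(cb n*((2*(n:ℝ))^K * CK))) := by
          rw [hw30]
          exact add_le_add_right htail _
    have : |I n n - S n| ≤ (∑' m, w1 m) + (∑' m, w2 m) + (∑' m, w3 m) := by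
      rw [← ht12]; exact habs
    simp only [hErrdef]
    linarith [hT1, hT2.le, hT3, this]
  -- the limit of the error term
  have hnat : Tendsto (fun n : ℕ => (n:ℝ)) atTop atTop := tendsto_natCast_atTop_atTop
  set G : ℕ → ℝ := fun n =>
    C₄ * (n:ℝ)^(b - 1/2)
    + C₃*(1+(2:ℝ)^q) * ((n:ℝ)^q * Real.exp (-((n:ℝ)^a)))
    + C₃ * ((n:ℝ)^q * Real.exp (-(n:ℝ)))
    + 2*C₃ * ((n:ℝ)^q * Real.exp (-(s4 * (n:ℝ))))
    + C₃*CK*2^K * ((n:ℝ)^(K:ℝ) * Real.exp (-(s4 * (n:ℝ)))) with hGdef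
  have hG : Tendsto G atTop (nhds 0) := by
    have c1 : Tendsto (fun x:ℝ => x ^ (b - 1/2)) atTop (nhds 0) := by
      have h := tendsto_rpow_neg_atTop (y := 1/2 - b) (by linarith)
      have e : (fun x:ℝ => x ^ (-(1/2 - b))) = fun x:ℝ => x ^ (b - 1/2) := by
        funext x; norm_num
      rwa [e] at h
    have c2 : Tendsto (fun x:ℝ => x^q * Real.exp (-((x:ℝ)^a))) atTop (nhds 0) := by
      have h := tendsto_rpow_mul_exp_neg_rpow q 1 a one_pos ha
      simpa only [one_mul] using h
    have c3 : Tendsto (fun x:ℝ => x^q * Real.exp (-x)) atTop (nhds 0) := by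
      have h := tendsto_rpow_mul_exp_neg_mul_atTop_nhds_zero q 1 one_pos
      simpa only [neg_mul, one_mul] using h
    have c4 : Tendsto (fun x:ℝ => x^q * Real.exp (-(s4*x))) atTop (nhds 0) := by
      have h := tendsto_rpow_mul_exp_neg_mul_atTop_nhds_zero q s4 hs4
      simpa only [neg_mul] using h
    have c5 : Tendsto (fun x:ℝ => x^(K:ℝ) * Real.exp (-(s4*x))) atTop (nhds 0) := by
      have h := tendsto_rpow_mul_exp_neg_mul_atTop_nhds_zero (K:ℝ) s4 hs4
      simpa only [neg_mul] using h
    have t1 := (c1.comp hnat).const_mul C₄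
    have t2 := (c2.comp hnat).const_mul (C₃*(1+(2:ℝ)^q))
    have t3 := (c3.comp hnat).const_mul C₃
    have t4 := (c4.comp hnat).const_mul (2*C₃)
    have t5 := (c5.comp hnat).const_mul (C₃*CK*2^K)
    have tot := (((t1.add t2).add t3).add t4).add t5
    rw [hGdef]
    simpa [Function.comp] using tot
  have hEv : ∀ᶠ n : ℕ in atTop, ‖(1/(n:ℝ)) * I n n - (1/(n:ℝ)) * S n‖ ≤ G n := by
    filter_upwards [eventually_ge_atTop 1] with n hn
    have hn1 : (1:ℝ) ≤ (n:ℝ) := by exact_mod_cast hn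
    have hn0 : (0:ℝ) < (n:ℝ) := by linarith
    have h1x : 1/(n:ℝ) ≤ 1 := by rw [div_le_one hn0]; exact hn1
    have h1x0 : (0:ℝ) ≤ 1/(n:ℝ) := by positivity
    have hcb' : cb n ≤ Real.exp (-(s4 * (n:ℝ))) := by
      rw [hs4def]
      exact cb_le n
    have hcbn : (0:ℝ) ≤ cb n := cb_nonneg n
    have hrq : (0:ℝ) ≤ (n:ℝ)^q := Real.rpow_nonneg hn0.le q
    have hrK : (0:ℝ) ≤ (2*(n:ℝ))^K := pow_nonneg (by positivity) K
    have h2q : (0:ℝ) ≤ (2:ℝ)^q := Real.rpow_nonneg (by norm_num) _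
    calc ‖(1/(n:ℝ)) * I n n - (1/(n:ℝ)) * S n‖
        = (1/(n:ℝ)) * |I n n - S n| := by
          rw [← mul_sub, Real.norm_eq_abs, abs_mul, abs_of_nonneg h1x0]
      _ ≤ (1/(n:ℝ)) * Err n := mul_le_mul_of_nonneg_left (key n hn) h1x0
      _ ≤ G n := by
          simp only [hErrdef, hGdef]
          have e1 : (1/(n:ℝ)) * (C₄ * (n:ℝ)^b * (n:ℝ)^((1:ℝ)/2)) =
              C₄ * (n:ℝ)^(b - 1/2) := by
            rw [show b - 1/2 = b + 1/2 + -1 by ring, Real.rpow_add hn0,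
              Real.rpow_add hn0, Real.rpow_neg_one]
            ring
          have e2 : (1/(n:ℝ)) * (C₃*(1+(2:ℝ)^q)*(n:ℝ)^q*Real.exp (-((n:ℝ)^a))) ≤
              C₃*(1+(2:ℝ)^q) * ((n:ℝ)^q * Real.exp (-((n:ℝ)^a))) := by
            have hnn : (0:ℝ) ≤ C₃*(1+(2:ℝ)^q)*(n:ℝ)^q*Real.exp (-((n:ℝ)^a)) :=
              mul_nonneg (mul_nonneg (mul_nonneg hC₃.le (by linarith)) hrq)
                (Real.exp_nonneg _)
            calc (1/(n:ℝ)) * (C₃*(1+(2:ℝ)^q)*(n:ℝ)^q*Real.exp (-((n:ℝ)^a)))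
                ≤ 1 * (C₃*(1+(2:ℝ)^q)*(n:ℝ)^q*Real.exp (-((n:ℝ)^a))) :=
                  mul_le_mul_of_nonneg_right h1x hnn
              _ = C₃*(1+(2:ℝ)^q) * ((n:ℝ)^q * Real.exp (-((n:ℝ)^a))) := by ring
          have e3 : (1/(n:ℝ)) * (Real.exp (-(n:ℝ))*(C₃*(n:ℝ)^q)) ≤
              C₃ * ((n:ℝ)^q * Real.exp (-(n:ℝ))) := by
            have hnn : (0:ℝ) ≤ Real.exp (-(n:ℝ))*(C₃*(n:ℝ)^q) :=
              mul_nonneg (Real.exp_nonneg _) (mul_nonneg hC₃.le hrq)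
            calc (1/(n:ℝ)) * (Real.exp (-(n:ℝ))*(C₃*(n:ℝ)^q))
                ≤ 1 * (Real.exp (-(n:ℝ))*(C₃*(n:ℝ)^q)) :=
                  mul_le_mul_of_nonneg_right h1x hnn
              _ = C₃ * ((n:ℝ)^q * Real.exp (-(n:ℝ))) := by ring
          have e4 : (1/(n:ℝ)) * ((C₃*(n:ℝ)^q)*(cb n*2)) ≤
              2*C₃ * ((n:ℝ)^q * Real.exp (-(s4 * (n:ℝ)))) := by
            have hnn : (0:ℝ) ≤ (C₃*(n:ℝ)^q)*(cb n*2) :=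
              mul_nonneg (mul_nonneg hC₃.le hrq) (mul_nonneg hcbn (by norm_num))
            calc (1/(n:ℝ)) * ((C₃*(n:ℝ)^q)*(cb n*2))
                ≤ 1 * ((C₃*(n:ℝ)^q)*(cb n*2)) := mul_le_mul_of_nonneg_right h1x hnn
              _ = (C₃*(n:ℝ)^q)*(cb n*2) := one_mul _
              _ ≤ (C₃*(n:ℝ)^q)*(Real.exp (-(s4 * (n:ℝ)))*2) := by
                  refine mul_le_mul_of_nonneg_left ?_ (mul_nonneg hC₃.le hrq)
                  linarith
              _ = 2*C₃ * ((n:ℝ)^q * Real.exp (-(s4 * (n:ℝ)))) := by ring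
          have e5 : (1/(n:ℝ)) * (C₃*(cb n*((2*(n:ℝ))^K * CK))) ≤
              C₃*CK*2^K * ((n:ℝ)^(K:ℝ) * Real.exp (-(s4 * (n:ℝ)))) := by
            have hnn : (0:ℝ) ≤ C₃*(cb n*((2*(n:ℝ))^K * CK)) :=
              mul_nonneg hC₃.le (mul_nonneg hcbn (mul_nonneg hrK hCK0))
            calc (1/(n:ℝ)) * (C₃*(cb n*((2*(n:ℝ))^K * CK)))
                ≤ 1 * (C₃*(cb n*((2*(n:ℝ))^K * CK))) := mul_le_mul_of_nonneg_right h1x hnn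
              _ = C₃*(cb n*((2*(n:ℝ))^K * CK)) := one_mul _
              _ ≤ C₃*(Real.exp (-(s4 * (n:ℝ)))*((2*(n:ℝ))^K * CK)) := by
                  refine mul_le_mul_of_nonneg_left ?_ hC₃.le
                  exact mul_le_mul_of_nonneg_right hcb' (mul_nonneg hrK hCK0)
              _ = C₃*CK*2^K * ((n:ℝ)^(K:ℝ) * Real.exp (-(s4 * (n:ℝ)))) := by
                  rw [mul_pow, ← Real.rpow_natCast (n:ℝ) K]
                  ring
          have expand : (1/(n:ℝ)) *
              (C₄ * (n:ℝ)^b * (n:ℝ)^((1:ℝ)/2)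
              + C₃*(1+(2:ℝ)^q)*(n:ℝ)^q*Real.exp (-((n:ℝ)^a))
              + Real.exp (-(n:ℝ))*(C₃*(n:ℝ)^q)
              + (C₃*(n:ℝ)^q)*(cb n*2)
              + C₃*(cb n * ((2*(n:ℝ))^K * CK))) =
              (1/(n:ℝ)) * (C₄ * (n:ℝ)^b * (n:ℝ)^((1:ℝ)/2))
              + (1/(n:ℝ)) * (C₃*(1+(2:ℝ)^q)*(n:ℝ)^q*Real.exp (-((n:ℝ)^a)))
              + (1/(n:ℝ)) * (Real.exp (-(n:ℝ))*(C₃*(n:ℝ)^q))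
              + (1/(n:ℝ)) * ((C₃*(n:ℝ)^q)*(cb n*2))
              + (1/(n:ℝ)) * (C₃*(cb n * ((2*(n:ℝ))^K * CK))) := by ring
          rw [expand]
          linarith [e1.le, e2, e3, e4, e5]
  have hzero : Tendsto (fun n : ℕ => (1/(n:ℝ)) * I n n - (1/(n:ℝ)) * S n)
      atTop (nhds 0) := squeeze_zero_norm' hEv hG
  have hpois' : Tendsto (fun n : ℕ => (1/(n:ℝ)) * S n) atTop (nhds Hstar) := by
    rw [hSdef, hIdef]
    exact hpois
  have hfinal := hpois'.add hzero
  rw [add_zero] at hfinal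
  have e : (fun n : ℕ => (1/(n:ℝ)) * S n + ((1/(n:ℝ)) * I n n - (1/(n:ℝ)) * S n)) =
      fun n : ℕ => (1/(n:ℝ)) * I n n := funext fun n => by ring
  rw [e] at hfinal
  rw [hIdef] at hfinal
  exact hfinal

end Main
end

section
/- Let Ψ_rad : [0,∞) → [0,∞) be increasing on [R₀,∞) with Ψ_rad(τ) ≥ A₁ log τ for τ ≥ R₀ where A₁ > d, and Ψ'_rad(τ) ≥ A₂/τ for τ ≥ R₀. Then for R ≥ R₀: ∫_R^∞ τ^{d−1} e^{−Ψ_rad(τ)} dτ ≤ (1/A₂)·(1 − d/A₁)^{−1} · exp(−Ψ_rad(R)(1 − d/A₁)). -/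
open Real Set MeasureTheory Filter Topology

/-- Let `Ψ_rad : [0,∞) → [0,∞)` be increasing on `[R₀,∞)` with
`Ψ_rad(τ) ≥ A₁ log τ` for `τ ≥ R₀` (where `A₁ > d`) and `Ψ'_rad(τ) ≥ A₂/τ` for
`τ ≥ R₀`.  Then for `R ≥ R₀`:
`∫_R^∞ τ^{d−1} e^{−Ψ_rad(τ)} dτ ≤ (1/A₂)·(1 − d/A₁)⁻¹·exp(−Ψ_rad(R)(1 − d/A₁))`. -/
theorem tail_integral_bound {d : ℕ} (hd : 0 < d) (Ψ Ψ' : ℝ → ℝ) (A₁ A₂ R₀ R : ℝ)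
    (hA₁ : (d : ℝ) < A₁) (hA₂ : 0 < A₂) (hR₀ : 0 < R₀) (hR : R₀ ≤ R)
    (hnonneg : ∀ τ : ℝ, 0 ≤ τ → 0 ≤ Ψ τ)
    (hmono : MonotoneOn Ψ (Ici R₀))
    (hlog : ∀ τ : ℝ, R₀ ≤ τ → A₁ * Real.log τ ≤ Ψ τ)
    (hderiv : ∀ τ : ℝ, R₀ ≤ τ → HasDerivAt Ψ (Ψ' τ) τ)
    (hΨ' : ∀ τ : ℝ, R₀ ≤ τ → A₂ / τ ≤ Ψ' τ) :
    ∫ τ in Ioi R, τ ^ (d - 1) * Real.exp (-Ψ τ) ≤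
      (1 / A₂) * (1 - d / A₁)⁻¹ * Real.exp (-Ψ R * (1 - d / A₁)) := by
  have hA₁pos : (0:ℝ) < A₁ := lt_of_le_of_lt (Nat.cast_nonneg d) hA₁
  set c : ℝ := 1 - d / A₁ with hc
  have hcpos : 0 < c := by
    have h : (d : ℝ) / A₁ < 1 := (div_lt_one hA₁pos).2 hA₁
    rw [hc]; linarith
  set g : ℝ → ℝ := fun τ => -(1 / c) * Real.exp (-(c * Ψ τ)) with hg
  set g' : ℝ → ℝ := fun τ => Ψ' τ * Real.exp (-(c * Ψ τ)) with hg'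
  have hgd : ∀ τ : ℝ, R₀ ≤ τ → HasDerivAt g (g' τ) τ := by
    intro τ hτ
    have h1 : HasDerivAt (fun τ => -(c * Ψ τ)) (-(c * Ψ' τ)) τ :=
      (((hderiv τ hτ).const_mul c)).neg
    have h2 := (h1.exp).const_mul (-(1 / c))
    refine h2.congr_deriv ?_
    show _ = Ψ' τ * Real.exp (-(c * Ψ τ))
    linear_combination (Ψ' τ * Real.exp (-(c * Ψ τ))) * one_div_mul_cancel hcpos.ne'
  have hg'nonneg : ∀ τ : ℝ, R₀ ≤ τ → 0 ≤ g' τ := by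
    intro τ hτ
    have hτpos : 0 < τ := lt_of_lt_of_le hR₀ hτ
    have : 0 < A₂ / τ := div_pos hA₂ hτpos
    exact mul_nonneg (le_trans this.le (hΨ' τ hτ)) (Real.exp_nonneg _)
  -- limit of g at infinity is 0
  have hlim : Tendsto g atTop (𝓝 0) := by
    have hb : Tendsto (fun τ : ℝ => Real.exp (-(c * A₁) * Real.log τ)) atTop (𝓝 0) := by
      have h1 : Tendsto (fun τ : ℝ => -(c * A₁) * Real.log τ) atTop atBot :=
        Tendsto.const_mul_atTop_of_neg (by nlinarith) Real.tendsto_log_atTop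
      exact Real.tendsto_exp_atBot.comp h1
    have h0 : Tendsto (fun τ : ℝ => Real.exp (-(c * Ψ τ))) atTop (𝓝 0) := by
      apply squeeze_zero' (Eventually.of_forall fun τ => Real.exp_nonneg _) ?_ hb
      filter_upwards [eventually_ge_atTop R₀] with τ hτ
      apply Real.exp_le_exp.2
      have h2 : c * (A₁ * Real.log τ) ≤ c * Ψ τ :=
        mul_le_mul_of_nonneg_left (hlog τ hτ) hcpos.le
      nlinarith [h2]
    simpa only [mul_zero] using h0.const_mul (-(1/c))
  have hint : ∫ τ in Ioi R, g' τ = 0 - g R :=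
    integral_Ioi_of_hasDerivAt_of_nonneg
      ((hgd R hR).continuousAt.continuousWithinAt)
      (fun x hx => hgd x (le_trans hR (le_of_lt hx)))
      (fun x hx => hg'nonneg x (le_trans hR (le_of_lt hx))) hlim
  have hgint : IntegrableOn g' (Ioi R) :=
    integrableOn_Ioi_deriv_of_nonneg ((hgd R hR).continuousAt.continuousWithinAt)
      (fun x hx => hgd x (le_trans hR (le_of_lt hx)))
      (fun x hx => hg'nonneg x (le_trans hR (le_of_lt hx))) hlim
  -- pointwise bound
  have hpt : ∀ τ ∈ Ioi R, τ ^ (d - 1) * Real.exp (-Ψ τ) ≤ (1 / A₂) * g' τ := by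
    intro τ hτmem
    have hτR₀ : R₀ ≤ τ := le_trans hR (le_of_lt hτmem)
    have hτpos : 0 < τ := lt_of_lt_of_le hR₀ hτR₀
    have hΨ'pos : 0 < Ψ' τ := lt_of_lt_of_le (div_pos hA₂ hτpos) (hΨ' τ hτR₀)
    -- τ^d ≤ exp((d/A₁) * Ψ τ)
    have hpow : (τ : ℝ) ^ d ≤ Real.exp ((d / A₁) * Ψ τ) := by
      have hlogτ : Real.log τ ≤ Ψ τ / A₁ := by
        rw [le_div_iff₀ hA₁pos]
        linarith [hlog τ hτR₀]
      have : (τ : ℝ) ^ d = Real.exp ((d : ℝ) * Real.log τ) := by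
        rw [← Real.exp_log hτpos, ← Real.exp_nat_mul, Real.exp_log hτpos]
      rw [this]
      apply Real.exp_le_exp.2
      have : (d : ℝ) * Real.log τ ≤ (d : ℝ) * (Ψ τ / A₁) :=
        mul_le_mul_of_nonneg_left hlogτ (Nat.cast_nonneg d)
      calc (d : ℝ) * Real.log τ ≤ (d : ℝ) * (Ψ τ / A₁) := this
        _ = (d / A₁) * Ψ τ := by ring
    -- 1 ≤ τ * Ψ' τ / A₂
    have h1 : A₂ ≤ τ * Ψ' τ := by
      have := hΨ' τ hτR₀
      rw [div_le_iff₀ hτpos] at this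
      linarith [this]
    have key : τ ^ (d - 1) * Real.exp (-Ψ τ) ≤ (1 / A₂) * (Ψ' τ * (τ ^ d * Real.exp (-Ψ τ))) := by
      have hdd : d - 1 + 1 = d := Nat.succ_pred_eq_of_pos hd
      have : τ ^ (d - 1) * Real.exp (-Ψ τ) * A₂ ≤ τ ^ (d - 1) * Real.exp (-Ψ τ) * (τ * Ψ' τ) := by
        apply mul_le_mul_of_nonneg_left h1
        positivity
      rw [div_mul_eq_mul_div, le_div_iff₀ hA₂, one_mul]
      calc τ ^ (d - 1) * Real.exp (-Ψ τ) * A₂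
          ≤ τ ^ (d - 1) * Real.exp (-Ψ τ) * (τ * Ψ' τ) := this
        _ = Ψ' τ * ((τ ^ (d - 1) * τ) * Real.exp (-Ψ τ)) := by ring
        _ = Ψ' τ * (τ ^ d * Real.exp (-Ψ τ)) := by rw [← pow_succ, hdd]
    have key2 : τ ^ d * Real.exp (-Ψ τ) ≤ Real.exp (-(c * Ψ τ)) := by
      calc τ ^ d * Real.exp (-Ψ τ)
          ≤ Real.exp ((d / A₁) * Ψ τ) * Real.exp (-Ψ τ) :=
            mul_le_mul_of_nonneg_right hpow (Real.exp_nonneg _)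
        _ = Real.exp ((d / A₁) * Ψ τ + -Ψ τ) := (Real.exp_add _ _).symm
        _ = Real.exp (-(c * Ψ τ)) := by rw [hc]; ring_nf
    calc τ ^ (d - 1) * Real.exp (-Ψ τ)
        ≤ (1 / A₂) * (Ψ' τ * (τ ^ d * Real.exp (-Ψ τ))) := key
      _ ≤ (1 / A₂) * (Ψ' τ * Real.exp (-(c * Ψ τ))) := by
          apply mul_le_mul_of_nonneg_left _ (by positivity)
          exact mul_le_mul_of_nonneg_left key2 hΨ'pos.le
      _ = (1 / A₂) * g' τ := rfl
  -- measurability / integrability of the LHS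
  have hcontLHS : ContinuousOn (fun τ : ℝ => τ ^ (d - 1) * Real.exp (-Ψ τ)) (Ioi R) := by
    intro τ hτ
    have hτR₀ : R₀ ≤ τ := le_trans hR (le_of_lt hτ)
    exact (((continuousAt_id.pow _).mul
      (Real.continuous_exp.continuousAt.comp (hderiv τ hτR₀).continuousAt.neg)) :
        ContinuousAt (fun τ : ℝ => τ ^ (d - 1) * Real.exp (-Ψ τ)) τ).continuousWithinAt
  have hLHSint : IntegrableOn (fun τ : ℝ => τ ^ (d - 1) * Real.exp (-Ψ τ)) (Ioi R) := by
    apply Integrable.mono' (hgint.const_mul (1 / A₂))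
    · exact hcontLHS.aestronglyMeasurable measurableSet_Ioi
    · filter_upwards [ae_restrict_mem measurableSet_Ioi] with τ hτ
      rw [Real.norm_eq_abs, abs_of_nonneg]
      · exact hpt τ hτ
      · have hτpos : 0 < τ := lt_of_lt_of_le hR₀ (le_trans hR (le_of_lt hτ))
        positivity
  -- combine
  have hintle : ∫ τ in Ioi R, τ ^ (d - 1) * Real.exp (-Ψ τ) ≤ ∫ τ in Ioi R, (1 / A₂) * g' τ :=
    setIntegral_mono_on hLHSint (hgint.const_mul (1 / A₂)) measurableSet_Ioi hpt
  have hval : ∫ τ in Ioi R, (1 / A₂) * g' τ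
      = (1 / A₂) * (1 - d / A₁)⁻¹ * Real.exp (-Ψ R * (1 - d / A₁)) := by
    rw [integral_const_mul, hint]
    simp only [hg, ← hc]
    have : -(c * Ψ R) = -Ψ R * c := by ring
    rw [this]
    field_simp
    ring
  linarith [hintle, hval.le, hval.ge]
end
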